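/- Under the MMSB setup, the K×K matrix V_{*,1}(𝓘,:) is nonsingular and every entry of the vector (V_{*,1}(𝓘,:) V_{*,1}(𝓘,:)')^{-1} 𝟏 is strictly positive, where 𝟏 ∈ ℝ^K is the all-ones vector. -/

import Mathlib

open Matrix BigOperators

/-- Euclidean norm of the `i`-th row of a matrix. -/
noncomputable def rowNorm {m k : ℕ} (M : Matrix (Fin m) (Fin k) ℝ) (i : Fin m) : ℝ :=
  Real.sqrt (∑ j, (M i j) ^ 2)

/-- Lemma 3.4: `V_{*,1}(𝓘,:)` is nonsingular and every entry of
`(V_{*,1}(𝓘,:) V_{*,1}(𝓘,:)')⁻¹ 𝟏` is strictly positive. -/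
theorem stmt_3
    {n K : ℕ} (hn : 0 < n) (hK : 0 < K) (hKn : K ≤ n)
    (Pi : Matrix (Fin n) (Fin K) ℝ)
    (hPi_nonneg : ∀ i k, 0 ≤ Pi i k)
    (hPi_rowsum : ∀ i, ∑ k, Pi i k = 1)
    (hPi_rank : Pi.rank = K)
    (hpure : ∀ k : Fin K, ∃ i : Fin n, ∀ l, Pi i l = if l = k then 1 else 0)
    (Pt : Matrix (Fin K) (Fin K) ℝ)
    (hPt_symm : Pt.IsSymm)
    (hPt_nonneg : ∀ k l, 0 ≤ Pt k l)
    (hPt_rank : Pt.rank = K)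
    (hPt_le_one : ∀ k l, Pt k l ≤ 1)
    (hPt_max : ∃ k l, Pt k l = 1)
    (ρ τ : ℝ) (hρ0 : 0 < ρ) (hρ1 : ρ ≤ 1) (hτ : 0 ≤ τ)
    (Om : Matrix (Fin n) (Fin n) ℝ) (hOm : Om = Pi * (ρ • Pt) * Piᵀ)
    (deg : Fin n → ℝ) (hdeg : ∀ i, deg i = ∑ j, Om i j)
    (hpos : ∀ i, 0 < deg i + τ)
    (Ltau : Matrix (Fin n) (Fin n) ℝ)
    (hLtau : Ltau = Matrix.diagonal (fun i => (Real.sqrt (deg i + τ))⁻¹) * Om *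
      Matrix.diagonal (fun i => (Real.sqrt (deg i + τ))⁻¹))
    (Idx : Fin K → Fin n) (hIdx : Pi.submatrix Idx id = 1)
    (V : Matrix (Fin n) (Fin K) ℝ) (e : Fin K → ℝ)
    (hVorth : Vᵀ * V = 1) (he : ∀ k, e k ≠ 0)
    (hVE : Ltau = V * Matrix.diagonal e * Vᵀ)
    (hVrow : ∀ i, V i ≠ 0)
    (Vstar1 : Matrix (Fin n) (Fin K) ℝ)
    (hVstar1 : ∀ i k, Vstar1 i k = V i k / rowNorm V i) :
    IsUnit (Vstar1.submatrix Idx id) ∧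
    ∀ k, 0 < (((Vstar1.submatrix Idx id) * (Vstar1.submatrix Idx id)ᵀ)⁻¹ *ᵥ
      (fun _ => (1 : ℝ))) k := by
  classical
  -- the diagonal scaling
  set s : Fin n → ℝ := fun i => (Real.sqrt (deg i + τ))⁻¹ with hs
  have hspos : ∀ i, 0 < s i := fun i =>
    inv_pos.2 (Real.sqrt_pos.2 (hpos i))
  -- the K×K coefficient matrix B with V = diag s * Pi * B
  set B : Matrix (Fin K) (Fin K) ℝ :=
    (ρ • Pt) * (Piᵀ * Matrix.diagonal s) * V * Matrix.diagonal (fun k => (e k)⁻¹) with hBdef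
  have hdiag_e : Matrix.diagonal e * Matrix.diagonal (fun k => (e k)⁻¹) = (1 : Matrix (Fin K) (Fin K) ℝ) := by
    rw [Matrix.diagonal_mul_diagonal]
    convert Matrix.diagonal_one using 2
    ext k
    exact mul_inv_cancel₀ (he k)
  have hVB : V = Matrix.diagonal s * Pi * B := by
    have h1 : Matrix.diagonal s * Pi * B = Ltau * V * Matrix.diagonal (fun k => (e k)⁻¹) := by
      rw [hBdef, hLtau, hOm]
      simp only [Matrix.mul_assoc, hs]
    rw [h1, hVE]
    symm
    calc V * Matrix.diagonal e * Vᵀ * V * Matrix.diagonal (fun k => (e k)⁻¹)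
        = V * Matrix.diagonal e * (Vᵀ * V) * Matrix.diagonal (fun k => (e k)⁻¹) := by
          simp only [Matrix.mul_assoc]
      _ = V * (Matrix.diagonal e * Matrix.diagonal (fun k => (e k)⁻¹)) := by
          rw [hVorth, Matrix.mul_one]; simp only [Matrix.mul_assoc]
      _ = V := by rw [hdiag_e, Matrix.mul_one]
  have hVij : ∀ i j, V i j = s i * ∑ k, Pi i k * B k j := by
    intro i j
    conv_lhs => rw [hVB]
    rw [Matrix.mul_assoc, Matrix.diagonal_mul, Matrix.mul_apply]
  -- pure rows of Pi
  have hPiI : ∀ k l, Pi (Idx k) l = if k = l then 1 else 0 := by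
    intro k l
    have := congrFun (congrFun hIdx k) l
    simpa [Matrix.submatrix_apply, Matrix.one_apply] using this
  have hVIdx : ∀ k j, V (Idx k) j = s (Idx k) * B k j := by
    intro k j
    rw [hVij]
    congr 1
    rw [Finset.sum_congr rfl (fun l _ => by rw [hPiI])]
    simp
  -- row norms of B
  set nB : Fin K → ℝ := fun k => Real.sqrt (∑ j, (B k j) ^ 2) with hnB
  have hnBpos : ∀ k, 0 < nB k := by
    intro k
    apply Real.sqrt_pos.2
    have hne : ∃ j, B k j ≠ 0 := by
      by_contra h
      push_neg at h
      apply hVrow (Idx k)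
      funext j
      rw [hVIdx, h j, mul_zero]; rfl
    obtain ⟨j, hj⟩ := hne
    apply Finset.sum_pos' (fun l _ => sq_nonneg _) ⟨j, Finset.mem_univ j, _⟩
    positivity
  have hrowNormIdx : ∀ k, rowNorm V (Idx k) = s (Idx k) * nB k := by
    intro k
    rw [rowNorm, hnB]
    have : ∀ j, (V (Idx k) j) ^ 2 = (s (Idx k)) ^ 2 * (B k j) ^ 2 := by
      intro j; rw [hVIdx]; ring
    rw [Finset.sum_congr rfl (fun j _ => this j), ← Finset.mul_sum,
      Real.sqrt_mul (sq_nonneg _), Real.sqrt_sq (le_of_lt (hspos _))]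
  set M : Matrix (Fin K) (Fin K) ℝ := Vstar1.submatrix Idx id with hMdef
  have hM : ∀ k j, M k j = B k j / nB k := by
    intro k j
    rw [hMdef, Matrix.submatrix_apply, id, hVstar1, hrowNormIdx, hVIdx,
      mul_div_mul_left _ _ (ne_of_gt (hspos _))]
  -- the nonnegative weight matrix
  set W : Matrix (Fin n) (Fin K) ℝ := Matrix.of (fun i k => s i * Pi i k * nB k) with hWdef
  have hWnn : ∀ i k, 0 ≤ W i k := by
    intro i k
    exact mul_nonneg (mul_nonneg (le_of_lt (hspos i)) (hPi_nonneg i k)) (le_of_lt (hnBpos k))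
  have hVW : V = W * M := by
    ext i j
    rw [Matrix.mul_apply, hVij]
    rw [Finset.mul_sum]
    apply Finset.sum_congr rfl
    intro k _
    rw [hM, hWdef]
    simp only [Matrix.of_apply, div_eq_mul_inv]
    rw [mul_assoc, mul_assoc, mul_comm (nB k), mul_assoc, inv_mul_cancel₀ (ne_of_gt (hnBpos k)), mul_one]
  have hWI : ∀ k l, W (Idx k) l = if k = l then s (Idx k) * nB k else 0 := by
    intro k l
    rw [hWdef]
    simp only [Matrix.of_apply, hPiI]
    by_cases h : k = l
    · subst h; simp
    · simp [h]
  -- key identity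
  have hone : (Mᵀ * (Wᵀ * W)) * M = 1 := by
    have : (W * M)ᵀ * (W * M) = 1 := by rw [← hVW]; exact hVorth
    rw [Matrix.transpose_mul] at this
    rw [← this]
    simp only [Matrix.mul_assoc]
  have hone' : M * (Mᵀ * (Wᵀ * W)) = 1 := mul_eq_one_comm.2 hone
  have hUnit : IsUnit M := IsUnit.of_mul_eq_one _ hone'
  refine ⟨hUnit, ?_⟩
  have hinv : (M * Mᵀ)⁻¹ = Wᵀ * W := by
    apply Matrix.inv_eq_right_inv
    rw [Matrix.mul_assoc]
    exact hone'
  intro k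
  rw [hinv, Matrix.mulVec, dotProduct]
  simp only [mul_one]
  have hterm : ∀ l, (Wᵀ * W) k l = ∑ i, W i k * W i l := by
    intro l
    rw [Matrix.mul_apply]
    rfl
  rw [Finset.sum_congr rfl (fun l _ => hterm l), Finset.sum_comm]
  apply Finset.sum_pos'
  · intro i _
    exact Finset.sum_nonneg fun l _ => mul_nonneg (hWnn i k) (hWnn i l)
  · refine ⟨Idx k, Finset.mem_univ _, ?_⟩
    apply Finset.sum_pos'
    · intro l _
      exact mul_nonneg (hWnn _ k) (hWnn _ l)
    · refine ⟨k, Finset.mem_univ _, ?_⟩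
      rw [hWI k k]
      simp only [if_pos rfl]
      exact mul_pos (mul_pos (hspos _) (hnBpos _)) (mul_pos (hspos _) (hnBpos _))
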